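/- Suppose T > 1 and there exist constants 0 < ν_* ≤ ν(t) ≤ ν* < 1 for all t ∈ [0,T]. Then for every 1 ≤ n ≤ N one has ∑_{k=1}^{n} b^{(ν)}_{k,1} ≤ 1/(1−ν*) + (T^{1−ν_*} − 1)/(1−ν_*). -/

import Mathlib

open Finset intervalIntegral

-- Gamma ≥ 1 on (0,1]
lemma one_le_Gamma_aux {x : ℝ} (hx : 0 < x) (hx1 : x ≤ 1) : 1 ≤ Real.Gamma x := by
  rcases eq_or_lt_of_le hx1 with h | h
  · rw [h, Real.Gamma_one]
  have h2x : (0:ℝ) < 2 - x := by linarith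
  have hc := Real.convexOn_Gamma.2 (Set.mem_Ioi.2 hx) (Set.mem_Ioi.2 (by norm_num : (0:ℝ) < 2))
    (show (0:ℝ) ≤ 1/(2-x) by positivity)
    (show (0:ℝ) ≤ (1-x)/(2-x) by apply div_nonneg <;> linarith)
    (show 1/(2-x) + (1-x)/(2-x) = 1 by field_simp; ring)
  have hxx : (1/(2-x)) * x + ((1-x)/(2-x)) * 2 = 1 := by field_simp; ring
  simp only [smul_eq_mul, mul_one] at hc
  rw [hxx, Real.Gamma_one, Real.Gamma_two] at hc
  have h2x' : (0:ℝ) < 1/(2-x) := by positivity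
  have e : (1:ℝ) - (1-x)/(2-x) = 1/(2-x) := by field_simp; ring
  have hfin : 1/(2-x) * 1 ≤ 1/(2-x) * Real.Gamma x := by
    rw [mul_one]; linarith
  exact le_of_mul_le_mul_left hfin h2x'

-- comparison of exponents on [0,1]
lemma pow_diff_le_low {α β a c : ℝ} (hc : 0 ≤ c) (hca : c ≤ a) (ha : a ≤ 1)
    (hβ : 0 < β) (hβα : β ≤ α) (hα : α < 1) :
    (a ^ α - c ^ α) / α ≤ (a ^ β - c ^ β) / β := by
  have hα0 : 0 < α := lt_of_lt_of_le hβ hβα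
  have e1 : (a ^ α - c ^ α) / α = ∫ s in c..a, s ^ (α - 1) := by
    rw [integral_rpow (Or.inl (by linarith))]; ring_nf
  have e2 : (a ^ β - c ^ β) / β = ∫ s in c..a, s ^ (β - 1) := by
    rw [integral_rpow (Or.inl (by linarith))]; ring_nf
  rw [e1, e2]
  apply intervalIntegral.integral_mono_on hca
    (intervalIntegrable_rpow' (by linarith)) (intervalIntegrable_rpow' (by linarith))
  intro s hs
  rcases eq_or_lt_of_le (hc.trans hs.1) with h0 | h0
  · rw [← h0]
    rw [Real.zero_rpow (by linarith), Real.zero_rpow (by linarith)]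
  · exact Real.rpow_le_rpow_of_exponent_ge h0 (hs.2.trans ha) (by linarith)

-- comparison of exponents on [1,∞)
lemma pow_diff_le_high {α β a c : ℝ} (hc : 1 ≤ c) (hca : c ≤ a)
    (hα : 0 < α) (hβα : α ≤ β) (hβ : β < 1) :
    (a ^ α - c ^ α) / α ≤ (a ^ β - c ^ β) / β := by
  have hβ0 : 0 < β := lt_of_lt_of_le hα hβα
  have e1 : (a ^ α - c ^ α) / α = ∫ s in c..a, s ^ (α - 1) := by
    rw [integral_rpow (Or.inl (by linarith))]; ring_nf
  have e2 : (a ^ β - c ^ β) / β = ∫ s in c..a, s ^ (β - 1) := by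
    rw [integral_rpow (Or.inl (by linarith))]; ring_nf
  rw [e1, e2]
  apply intervalIntegral.integral_mono_on hca
    (intervalIntegrable_rpow' (by linarith)) (intervalIntegrable_rpow' (by linarith))
  intro s hs
  exact Real.rpow_le_rpow_of_exponent_le (hc.trans hs.1) (by linarith)

-- key per-term inequality
lemma key_aux {νk νs νS a c : ℝ} (hνs : 0 < νs) (hνS : νS < 1)
    (h1 : νs ≤ νk) (h2 : νk ≤ νS) (hc : 0 ≤ c) (hca : c ≤ a) :
    (a ^ (1-νk) - c ^ (1-νk)) / (1-νk) ≤
      ((min a 1) ^ (1-νS) - (min c 1) ^ (1-νS)) / (1-νS)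
      + ((max a 1) ^ (1-νs) - (max c 1) ^ (1-νs)) / (1-νs) := by
  have hk0 : 0 < 1 - νk := by linarith
  have hS0 : 0 < 1 - νS := by linarith
  have hs1 : 1 - νs < 1 := by linarith
  rcases le_or_gt a 1 with ha | ha
  · rw [min_eq_left ha, min_eq_left (hca.trans ha), max_eq_right ha,
      max_eq_right (hca.trans ha), Real.one_rpow, sub_self, zero_div, add_zero]
    exact pow_diff_le_low hc hca ha hS0 (by linarith) (by linarith)
  rcases le_or_gt 1 c with hc1 | hc1
  · rw [min_eq_right hc1, min_eq_right ha.le, Real.one_rpow, sub_self, zero_div,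
      zero_add, max_eq_left hc1, max_eq_left ha.le]
    exact pow_diff_le_high hc1 hca (by linarith) (by linarith) hs1
  · rw [min_eq_right ha.le, min_eq_left hc1.le, max_eq_left ha.le, max_eq_right hc1.le]
    have split : (a ^ (1-νk) - c ^ (1-νk)) / (1-νk)
        = ((1:ℝ) ^ (1-νk) - c ^ (1-νk)) / (1-νk) + (a ^ (1-νk) - (1:ℝ) ^ (1-νk)) / (1-νk) := by
      ring
    rw [split]
    have l1 := pow_diff_le_low hc hc1.le le_rfl hS0 (by linarith : (1-νS) ≤ 1-νk) (by linarith)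
    have l2 := pow_diff_le_high le_rfl ha.le hk0 (by linarith : 1-νk ≤ 1-νs) hs1
    simp only [Real.one_rpow] at l1 l2 ⊢
    linarith

/-- Suppose T > 1 and 0 < ν_* ≤ ν(t) ≤ ν* < 1 on [0,T]. Then for every
1 ≤ n ≤ N one has `∑_{k=1}^{n} b k 1 ≤ 1/(1-ν*) + (T^(1-ν_*) - 1)/(1-ν_*)`. -/
theorem l1_first_coeffs_sum_le_of_one_lt_T
    (T : ℝ) (hT : 1 < T) (N : ℕ) (hN : 0 < N)
    (τ : ℝ) (hτ : τ = T / N)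
    (t : ℕ → ℝ) (ht : ∀ k, t k = k * τ)
    (ν : ℝ → ℝ) (νs νS : ℝ) (hνs : 0 < νs) (hνS : νS < 1)
    (hν : ∀ s ∈ Set.Icc (0 : ℝ) T, νs ≤ ν s ∧ ν s ≤ νS)
    (b : ℕ → ℕ → ℝ)
    (hb : ∀ n k, 1 ≤ k → k ≤ n → n ≤ N →
      b n k = (1 / Real.Gamma (2 - ν (t n))) *
        ((t n - t (k - 1)) ^ (1 - ν (t n)) - (t n - t k) ^ (1 - ν (t n))))
    (n : ℕ) (hn1 : 1 ≤ n) (hnN : n ≤ N) :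
    ∑ k ∈ Finset.Icc 1 n, b k 1 ≤ 1 / (1 - νS) + (T ^ (1 - νs) - 1) / (1 - νs) := by
  have hNpos : (0:ℝ) < N := by exact_mod_cast hN
  have hT0 : (0:ℝ) < T := by linarith
  have hτpos : 0 < τ := by rw [hτ]; positivity
  have hνs1 : νs < 1 := by
    obtain ⟨ha, hb'⟩ := hν 0 ⟨le_rfl, le_of_lt hT0⟩; linarith
  have htnonneg : ∀ k : ℕ, 0 ≤ t k := by
    intro k; rw [ht]; positivity
  have htmono : ∀ k : ℕ, t k ≤ t (k+1) := by
    intro k; rw [ht, ht]; push_cast; nlinarith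
  have htle : ∀ k : ℕ, k ≤ N → t k ≤ T := by
    intro k hk
    rw [ht, hτ]
    have hkN : (k:ℝ) ≤ N := by exact_mod_cast hk
    calc (k:ℝ) * (T/N) ≤ N * (T/N) := by
          apply mul_le_mul_of_nonneg_right hkN; positivity
      _ = T := by field_simp
  have htmem : ∀ k : ℕ, k ≤ N → t k ∈ Set.Icc (0:ℝ) T :=
    fun k hk => ⟨htnonneg k, htle k hk⟩
  set g : ℕ → ℝ := fun j =>
    (min (t j) 1) ^ (1-νS) / (1-νS) + (max (t j) 1) ^ (1-νs) / (1-νs) with hg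
  -- per-term bound
  have step1 : ∀ k, 1 ≤ k → k ≤ n → b k 1 ≤ g k - g (k-1) := by
    intro k hk1 hkn
    have hkN : k ≤ N := hkn.trans hnN
    obtain ⟨hm1, hm2⟩ := hν (t k) (htmem k hkN)
    set m := ν (t k) with hm
    have h1m : 0 < 1 - m := by linarith
    have e0 : t k - t 0 = t k := by rw [ht 0]; simp
    have e1 : t k - t 1 = t (k-1) := by
      rw [ht, ht, ht]
      have : ((k-1 : ℕ):ℝ) = (k:ℝ) - 1 := by
        have := Nat.cast_sub hk1 (R := ℝ); simpa using this
      rw [this]; push_cast; ring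
    have hbk : b k 1 = (1 / Real.Gamma (2 - m)) *
        ((t k) ^ (1-m) - (t (k-1)) ^ (1-m)) := by
      rw [hb k 1 le_rfl hk1 hkN]
      norm_num [e0, e1, hm]
    have hΓeq : Real.Gamma (2 - m) = (1-m) * Real.Gamma (1-m) := by
      rw [show (2:ℝ) - m = (1-m) + 1 by ring, Real.Gamma_add_one (ne_of_gt h1m)]
    have hΓ : 1 - m ≤ Real.Gamma (2 - m) := by
      rw [hΓeq]
      nlinarith [one_le_Gamma_aux h1m (by linarith : 1 - m ≤ 1)]
    have htk1k : t (k-1) ≤ t k := by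
      have := htmono (k-1)
      rwa [Nat.sub_add_cancel hk1] at this
    have hdiff : 0 ≤ (t k) ^ (1-m) - (t (k-1)) ^ (1-m) := by
      have := Real.rpow_le_rpow (htnonneg (k-1)) htk1k (le_of_lt h1m)
      linarith
    have hb1 : b k 1 ≤ ((t k) ^ (1-m) - (t (k-1)) ^ (1-m)) / (1-m) := by
      rw [hbk, div_eq_mul_inv _ (1-m), mul_comm (_ - _) _, ← one_div]
      exact mul_le_mul_of_nonneg_right
        (one_div_le_one_div_of_le h1m hΓ) hdiff
    have hkey := key_aux (a := t k) (c := t (k-1)) hνs hνS hm1 hm2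
      (htnonneg (k-1)) htk1k
    have : g k - g (k-1) =
        ((min (t k) 1) ^ (1-νS) - (min (t (k-1)) 1) ^ (1-νS)) / (1-νS)
        + ((max (t k) 1) ^ (1-νs) - (max (t (k-1)) 1) ^ (1-νs)) / (1-νs) := by
      simp only [hg]; ring
    rw [this]
    exact hb1.trans hkey
  -- telescoping
  have tel : ∀ p : ℕ, ∑ k ∈ Finset.Icc 1 p, (g k - g (k-1)) = g p - g 0 := by
    intro p
    induction p with
    | zero => simp
    | succ q ih =>
      rw [Finset.sum_Icc_succ_top (by omega : 1 ≤ q+1), ih]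
      simp only [Nat.add_sub_cancel]
      ring
  have hsum : ∑ k ∈ Finset.Icc 1 n, b k 1 ≤ g n - g 0 := by
    rw [← tel n]
    apply Finset.sum_le_sum
    intro k hk
    rw [Finset.mem_Icc] at hk
    exact step1 k hk.1 hk.2
  -- endpoint values
  have hg0 : g 0 = 1 / (1-νs) := by
    have ht0 : t 0 = 0 := by rw [ht]; simp
    simp only [hg, ht0]
    rw [min_eq_left zero_le_one, max_eq_right zero_le_one,
      Real.zero_rpow (ne_of_gt (by linarith : (0:ℝ) < 1 - νS)), Real.one_rpow,
      zero_div, zero_add]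
  have hgn : g n ≤ 1 / (1-νS) + T ^ (1-νs) / (1-νs) := by
    have h1 : (min (t n) 1) ^ (1-νS) ≤ 1 := by
      apply Real.rpow_le_one (le_min (htnonneg n) zero_le_one) (min_le_right _ _)
        (by linarith)
    have h2 : (max (t n) 1) ^ (1-νs) ≤ T ^ (1-νs) := by
      apply Real.rpow_le_rpow (le_max_of_le_right zero_le_one)
        (max_le (htle n hnN) (le_of_lt hT)) (by linarith)
    have hS0 : 0 < 1 - νS := by linarith
    have hs0 : 0 < 1 - νs := by linarith
    simp only [hg]
    gcongr
  calc ∑ k ∈ Finset.Icc 1 n, b k 1 ≤ g n - g 0 := hsum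
    _ ≤ (1 / (1-νS) + T ^ (1-νs) / (1-νs)) - 1 / (1-νs) := by rw [hg0]; linarith
    _ = 1 / (1 - νS) + (T ^ (1 - νs) - 1) / (1 - νs) := by ring
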